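/- Let n ≥ 2 and A = [1, n-1]. Then C_A(C_n^2) = 4: every sequence of length 4 over C_n × C_n has an A-weighted consecutive product-one subsequence, and there is a sequence of length 3 over C_n × C_n with none. -/
import Mathlib


/-- A list `S` over an additive monoid has a nonempty `A`-weighted consecutive zero-sum
subsequence. -/
def WConsecZero {G : Type*} [AddMonoid G] (A : Set ℕ) (S : List G) : Prop :=
  ∃ T : List (G × ℕ), T ≠ [] ∧ T.map Prod.fst <:+: S ∧ (∀ p ∈ T, p.2 ∈ A) ∧
    (T.map fun p => p.2 • p.1).sum = 0

/-- The `A`-weighted consecutive Davenport constant `C_A(G)`, additive notation. -/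
noncomputable def CDavAdd (A : Set ℕ) (G : Type*) [AddMonoid G] : ℕ :=
  sInf {ℓ : ℕ | ∀ S : List G, ℓ ≤ S.length → WConsecZero A S}

section Aux

lemma wcz_mono {G : Type*} [AddMonoid G] {A : Set ℕ} {S S' : List G}
    (h : WConsecZero A S') (hS : S' <:+: S) : WConsecZero A S := by
  obtain ⟨T, h1, h2, h3, h4⟩ := h
  exact ⟨T, h1, h2.trans hS, h3, h4⟩

variable {n : ℕ}

lemma nsmul_n (hn : 2 ≤ n) (x : ZMod n × ZMod n) : n • x = 0 := by
  haveI : NeZero n := ⟨by omega⟩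
  have h : ∀ a : ZMod n, n • a = 0 := fun a => by
    rw [nsmul_eq_mul, ZMod.natCast_self, zero_mul]
  exact Prod.ext (by simp [h]) (by simp [h])

lemma ordSplit (hn : 2 ≤ n) (x : ZMod n × ZMod n) :
    (∃ a, a ∈ Set.Icc 1 (n - 1) ∧ a • x = 0) ∨ addOrderOf x = n := by
  haveI : NeZero n := ⟨by omega⟩
  have hd : addOrderOf x ∣ n := addOrderOf_dvd_of_nsmul_eq_zero (nsmul_n hn x)
  have hpos : 0 < addOrderOf x := addOrderOf_pos x
  rcases eq_or_ne (addOrderOf x) n with h | h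
  · exact Or.inr h
  · have hlt : addOrderOf x < n := lt_of_le_of_ne (Nat.le_of_dvd (by omega) hd) h
    exact Or.inl ⟨addOrderOf x, ⟨by omega, by omega⟩, addOrderOf_nsmul_eq_zero x⟩

-- from a • x = 0 with order n, a must be 0
lemma valrel (hn : 2 ≤ n) {x : ZMod n × ZMod n} (hx : addOrderOf x = n)
    {a : ZMod n} (h : a • x = 0) : a = 0 := by
  haveI : NeZero n := ⟨by omega⟩
  by_contra ha
  have hv : ((a.val : ℕ) : ZMod n) = a := ZMod.natCast_rightInverse a
  have h0 : a.val • x = 0 := by rw [← Nat.cast_smul_eq_nsmul (ZMod n), hv]; exact h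
  have hd : addOrderOf x ∣ a.val := addOrderOf_dvd_of_nsmul_eq_zero h0
  rw [hx] at hd
  have h1 : a.val ≠ 0 := fun v => ha ((ZMod.val_eq_zero a).mp v)
  have h2 : a.val < n := ZMod.val_lt a
  exact absurd (Nat.le_of_dvd (by omega) hd) (by omega)

lemma zeroComb (hn : 2 ≤ n) {g1 g2 : ZMod n × ZMod n}
    (h1 : addOrderOf g1 = n) (h2 : addOrderOf g2 = n)
    (hpair : ∀ a b : ℕ, a ∈ Set.Icc 1 (n - 1) → b ∈ Set.Icc 1 (n - 1) →
      a • g1 + b • g2 ≠ 0) :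
    ∀ a b : ZMod n, a • g1 + b • g2 = 0 → a = 0 ∧ b = 0 := by
  haveI : NeZero n := ⟨by omega⟩
  intro a b hab
  have hva : ((a.val : ℕ) : ZMod n) = a := ZMod.natCast_rightInverse a
  have hvb : ((b.val : ℕ) : ZMod n) = b := ZMod.natCast_rightInverse b
  rcases eq_or_ne a 0 with ha | ha
  · subst ha
    refine ⟨rfl, ?_⟩
    rw [zero_smul, zero_add] at hab
    exact valrel hn h2 hab
  rcases eq_or_ne b 0 with hb | hb
  · subst hb
    rw [zero_smul, add_zero] at hab
    exact absurd (valrel hn h1 hab) ha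
  · exfalso
    have h1a : a.val ≠ 0 := fun v => ha ((ZMod.val_eq_zero a).mp v)
    have h1b : b.val ≠ 0 := fun v => hb ((ZMod.val_eq_zero b).mp v)
    have h2a : a.val < n := ZMod.val_lt a
    have h2b : b.val < n := ZMod.val_lt b
    refine hpair a.val b.val ⟨by omega, by omega⟩ ⟨by omega, by omega⟩ ?_
    rw [← Nat.cast_smul_eq_nsmul (ZMod n) a.val, ← Nat.cast_smul_eq_nsmul (ZMod n) b.val,
      hva, hvb]
    exact hab

lemma surjComb (hn : 2 ≤ n) {g1 g2 : ZMod n × ZMod n}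
    (h1 : addOrderOf g1 = n) (h2 : addOrderOf g2 = n)
    (hpair : ∀ a b : ℕ, a ∈ Set.Icc 1 (n - 1) → b ∈ Set.Icc 1 (n - 1) →
      a • g1 + b • g2 ≠ 0) :
    ∀ z : ZMod n × ZMod n, ∃ a b : ZMod n, z = a • g1 + b • g2 := by
  haveI : NeZero n := ⟨by omega⟩
  set f : (ZMod n × ZMod n) → (ZMod n × ZMod n) := fun p => p.1 • g1 + p.2 • g2 with hf
  have hinj : Function.Injective f := by
    intro p q hpq
    have hz : (p.1 - q.1) • g1 + (p.2 - q.2) • g2 = 0 := by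
      simp only [hf] at hpq
      rw [sub_smul, sub_smul]
      rw [sub_add_sub_comm, hpq, sub_self]
    obtain ⟨e1, e2⟩ := zeroComb hn h1 h2 hpair _ _ hz
    have : p.1 = q.1 := by rwa [sub_eq_zero] at e1
    have : p.2 = q.2 := by rwa [sub_eq_zero] at e2
    exact Prod.ext ‹p.1 = q.1› ‹p.2 = q.2›
  have hsurj : Function.Surjective f := Finite.surjective_of_injective hinj
  intro z
  obtain ⟨⟨a, b⟩, hab⟩ := hsurj z
  exact ⟨a, b, hab.symm⟩

end Aux

section Key
variable {n : ℕ}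

lemma keyval (hn : 2 ≤ n) (c : ZMod n) (hc : c ≠ 0) :
    ∃ m : ℕ, m ∈ Set.Icc 1 (n - 1) ∧
      ∀ x : ZMod n × ZMod n, m • x = c • x := by
  haveI : NeZero n := ⟨by omega⟩
  have h1 : c.val ≠ 0 := fun v => hc ((ZMod.val_eq_zero c).mp v)
  have h2 : c.val < n := ZMod.val_lt c
  refine ⟨c.val, ⟨by omega, by omega⟩, fun x => ?_⟩
  rw [← Nat.cast_smul_eq_nsmul (ZMod n) c.val x, ZMod.natCast_rightInverse c]

lemma key (hn : 2 ≤ n) (g1 g2 g3 : ZMod n × ZMod n) :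
    WConsecZero (Set.Icc 1 (n - 1)) [g1, g2, g3] ∨
    ∃ a c : ℕ, a ∈ Set.Icc 1 (n - 1) ∧ c ∈ Set.Icc 1 (n - 1) ∧ a • g1 + c • g3 = 0 := by
  haveI : NeZero n := ⟨by omega⟩
  rcases ordSplit hn g1 with ⟨a, ha, hz⟩ | h1
  · exact Or.inl ⟨[(g1, a)], by simp, ⟨[], [g2, g3], by simp⟩,
      by simpa using ha, by simpa using hz⟩
  rcases ordSplit hn g2 with ⟨a, ha, hz⟩ | h2
  · exact Or.inl ⟨[(g2, a)], by simp, ⟨[g1], [g3], by simp⟩,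
      by simpa using ha, by simpa using hz⟩
  rcases ordSplit hn g3 with ⟨a, ha, hz⟩ | h3
  · exact Or.inl ⟨[(g3, a)], by simp, ⟨[g1, g2], [], by simp⟩,
      by simpa using ha, by simpa using hz⟩
  by_cases hpair : ∀ a b : ℕ, a ∈ Set.Icc 1 (n - 1) → b ∈ Set.Icc 1 (n - 1) →
      a • g1 + b • g2 ≠ 0
  · obtain ⟨a, b, hab⟩ := surjComb hn h1 h2 hpair g3
    rcases eq_or_ne a 0 with ha | ha
    · rcases eq_or_ne b 0 with hb | hb
      · exfalso
        rw [ha, hb, zero_smul, zero_smul, add_zero] at hab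
        rw [hab, addOrderOf_zero] at h3; omega
      · -- pair {2,3}
        obtain ⟨m, hm, hmx⟩ := keyval hn (-b) (neg_ne_zero.mpr hb)
        refine Or.inl ⟨[(g2, m), (g3, 1)], by simp, ⟨[g1], [], by simp⟩, ?_, ?_⟩
        · intro p hp
          simp only [List.mem_cons, List.not_mem_nil, or_false] at hp
          rcases hp with h | h
          · simp [h, hm]
          · simp [h, Set.mem_Icc]; omega
        · simp only [List.map_cons, List.map_nil, List.sum_cons, List.sum_nil, add_zero,
            one_smul, hmx]
          rw [hab, ha, zero_smul, zero_add, neg_smul, neg_add_cancel]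
    · rcases eq_or_ne b 0 with hb | hb
      · -- relation on {1,3}
        obtain ⟨m, hm, hmx⟩ := keyval hn (-a) (neg_ne_zero.mpr ha)
        refine Or.inr ⟨m, 1, hm, by simp [Set.mem_Icc]; omega, ?_⟩
        rw [hmx, one_smul, hab, hb, zero_smul, add_zero, neg_smul, neg_add_cancel]
      · -- triple
        obtain ⟨ma, hma, hmax⟩ := keyval hn (-a) (neg_ne_zero.mpr ha)
        obtain ⟨mb, hmb, hmbx⟩ := keyval hn (-b) (neg_ne_zero.mpr hb)
        refine Or.inl ⟨[(g1, ma), (g2, mb), (g3, 1)], by simp,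
          ⟨[], [], by simp⟩, ?_, ?_⟩
        · intro p hp
          simp only [List.mem_cons, List.not_mem_nil, or_false] at hp
          rcases hp with h | h | h
          · simp [h, hma]
          · simp [h, hmb]
          · simp [h, Set.mem_Icc]; omega
        · simp only [List.map_cons, List.map_nil, List.sum_cons, List.sum_nil, add_zero,
            one_smul, hmax, hmbx]
          rw [hab, neg_smul, neg_smul]
          abel
  · push_neg at hpair
    obtain ⟨a, b, ha, hb, hab⟩ := hpair
    refine Or.inl ⟨[(g1, a), (g2, b)], by simp, ⟨[], [g3], by simp⟩, ?_, ?_⟩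
    · intro p hp
      simp only [List.mem_cons, List.not_mem_nil, or_false] at hp
      rcases hp with h | h
      · simp [h, ha]
      · simp [h, hb]
    · simpa using hab

end Key

section Main
variable {n : ℕ}

lemma infix_three {α : Type*} {L : List α} {a b c : α} (h : L <:+: [a, b, c]) :
    L = [] ∨ L = [a] ∨ L = [b] ∨ L = [c] ∨ L = [a, b] ∨ L = [b, c] ∨ L = [a, b, c] := by
  obtain ⟨s, t, hst⟩ := h
  rcases s with _ | ⟨x, _ | ⟨y, _ | ⟨z, s⟩⟩⟩ <;>
    rcases L with _ | ⟨l1, _ | ⟨l2, _ | ⟨l3, _ | ⟨l4, L⟩⟩⟩⟩ <;>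
    first
      | simp_all
      | (exfalso; apply_fun List.length at hst; simp at hst; omega)

lemma castne (hn : 2 ≤ n) (k : ℕ) (hk : k ∈ Set.Icc 1 (n - 1)) : (k : ZMod n) ≠ 0 := by
  haveI : NeZero n := ⟨by omega⟩
  intro h
  rw [ZMod.natCast_eq_zero_iff] at h
  obtain ⟨h1, h2⟩ := hk
  exact absurd (Nat.le_of_dvd (by omega) h) (by omega)

theorem stmt15' (n : ℕ) (hn : 2 ≤ n) :
    (∀ S : List (ZMod n × ZMod n), S.length = 4 → WConsecZero (Set.Icc 1 (n - 1)) S) ∧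
      ∃ S : List (ZMod n × ZMod n), S.length = 3 ∧
        ¬ WConsecZero (Set.Icc 1 (n - 1)) S := by
  haveI : NeZero n := ⟨by omega⟩
  constructor
  · intro S hS
    rcases S with _ | ⟨g1, _ | ⟨g2, _ | ⟨g3, _ | ⟨g4, rest⟩⟩⟩⟩ <;>
      simp only [List.length_cons, List.length_nil] at hS
    · omega
    · omega
    · omega
    · omega
    have hrest : rest = [] := List.length_eq_zero_iff.mp (by omega)
    subst hrest
    rcases key hn g1 g2 g3 with hw | ⟨a, c, ha, hc, h13⟩
    · exact wcz_mono hw ⟨[], [g4], by simp⟩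
    rcases key hn g2 g3 g4 with hw | ⟨b, d, hb, hd, h24⟩
    · exact wcz_mono hw ⟨[g1], [], by simp⟩
    refine ⟨[(g1, a), (g2, b), (g3, c), (g4, d)], by simp, ⟨[], [], by simp⟩, ?_, ?_⟩
    · intro p hp
      simp only [List.mem_cons, List.not_mem_nil, or_false] at hp
      rcases hp with h | h | h | h <;> simp [h, ha, hb, hc, hd]
    · simp only [List.map_cons, List.map_nil, List.sum_cons, List.sum_nil, add_zero]
      calc a • g1 + (b • g2 + (c • g3 + d • g4))
          = (a • g1 + c • g3) + (b • g2 + d • g4) := by abel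
        _ = 0 := by rw [h13, h24, add_zero]
  · set e1 : ZMod n × ZMod n := (1, 0) with he1
    set e2 : ZMod n × ZMod n := (0, 1) with he2
    refine ⟨[e1, e2, e1], rfl, ?_⟩
    rintro ⟨T, hne, hinf, hA, hsum⟩
    rcases T with _ | ⟨p, _ | ⟨q, _ | ⟨r, T'⟩⟩⟩
    · exact hne rfl
    · -- singleton
      simp only [List.map_cons, List.map_nil] at hinf
      rcases infix_three hinf with h | h | h | h | h | h | h
      · simp at h
      · simp only [List.cons.injEq, and_true] at h
        have hc := congrArg Prod.fst hsum
        simp [h, he1, nsmul_eq_mul] at hc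
        exact castne hn p.2 (hA p (by simp)) hc
      · simp only [List.cons.injEq, and_true] at h
        have hc := congrArg Prod.snd hsum
        simp [h, he2, nsmul_eq_mul] at hc
        exact castne hn p.2 (hA p (by simp)) hc
      · simp only [List.cons.injEq, and_true] at h
        have hc := congrArg Prod.fst hsum
        simp [h, he1, nsmul_eq_mul] at hc
        exact castne hn p.2 (hA p (by simp)) hc
      · simp at h
      · simp at h
      · simp at h
    · -- pair
      simp only [List.map_cons, List.map_nil] at hinf
      rcases infix_three hinf with h | h | h | h | h | h | h
      · simp at h
      · simp at h
      · simp at h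
      · simp at h
      · simp only [List.cons.injEq, and_true] at h
        obtain ⟨h1, h2⟩ := h
        have hc := congrArg Prod.fst hsum
        simp [h1, h2, he1, he2, nsmul_eq_mul] at hc
        exact castne hn p.2 (hA p (by simp)) hc
      · simp only [List.cons.injEq, and_true] at h
        obtain ⟨h1, h2⟩ := h
        have hc := congrArg Prod.snd hsum
        simp [h1, h2, he1, he2, nsmul_eq_mul] at hc
        exact castne hn p.2 (hA p (by simp)) hc
      · simp at h
    · -- length ≥ 3 : forces T' = [] and T = [p,q,r] matching [e1,e2,e1]
      have hlen := hinf.sublist.length_le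
      simp only [List.length_map, List.length_cons, List.length_nil] at hlen
      have hT' : T' = [] := List.length_eq_zero_iff.mp (by omega)
      subst hT'
      simp only [List.map_cons, List.map_nil] at hinf
      rcases infix_three hinf with h | h | h | h | h | h | h
      · simp at h
      · simp at h
      · simp at h
      · simp at h
      · simp at h
      · simp at h
      · simp only [List.cons.injEq, and_true] at h
        obtain ⟨h1, h2, h3⟩ := h
        have hc := congrArg Prod.snd hsum
        simp [h1, h2, h3, he1, he2, nsmul_eq_mul] at hc
        exact castne hn q.2 (hA q (by simp)) hc
end Main


/-- With full weight `A = [1, n-1]`, `C_A(C_n²) = 4`: every sequence of length `4` over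
`C_n × C_n` has an `A`-weighted consecutive zero-sum subsequence, and some sequence of
length `3` has none. -/
theorem stmt15 (n : ℕ) (hn : 2 ≤ n) :
    (∀ S : List (ZMod n × ZMod n), S.length = 4 → WConsecZero (Set.Icc 1 (n - 1)) S) ∧
      ∃ S : List (ZMod n × ZMod n), S.length = 3 ∧
        ¬ WConsecZero (Set.Icc 1 (n - 1)) S := by
  exact stmt15' n hn
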